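/- Let X and Y be distinct Vamos pairs with X ∪ Y a circuit of the Vamos matroid, and suppose the dealer is a member of neither X nor Y. Then for any perfect secret sharing scheme, h(Y|X) ≤ 1 + 3λ. -/

import Mathlib

open MeasureTheory Finset

/-- Shannon entropy of a random variable with values in a finite type:
`H(f) = ∑ₐ −P(f = a)·log P(f = a)`. -/
noncomputable def shannonEntropy {Ω : Type} [MeasurableSpace Ω] {α : Type} [Fintype α]
    (μ : Measure Ω) (f : Ω → α) : ℝ :=
  ∑ a : α, Real.negMulLog ((μ (f ⁻¹' {a})).toReal)

set_option linter.unusedSectionVars false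

open MeasureTheory Finset



section EntropyLemmas

variable {Ω : Type} [MeasurableSpace Ω] (μ : Measure Ω) [IsProbabilityMeasure μ]
variable {α β γ : Type} [Fintype α] [Fintype β] [Fintype γ]

lemma shannonEntropy_comp_inj (f : Ω → α) (e : α → β) (he : Function.Injective e) :
    shannonEntropy μ (fun ω => e (f ω)) = shannonEntropy μ f := by
  classical
  unfold shannonEntropy
  have h0 : ∀ b : β, b ∉ Finset.univ.image e →
      Real.negMulLog ((μ ((fun ω => e (f ω)) ⁻¹' {b})).toReal) = 0 := by
    intro b hb
    have : (fun ω => e (f ω)) ⁻¹' {b} = ∅ := by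
      ext ω; simp only [Set.mem_preimage, Set.mem_singleton_iff, Set.mem_empty_iff_false,
        iff_false]
      intro h; exact hb (Finset.mem_image.2 ⟨f ω, Finset.mem_univ _, h⟩)
    rw [this]; simp [Real.negMulLog]
  rw [← Finset.sum_subset (Finset.subset_univ (Finset.univ.image e)) (fun b _ hb => h0 b hb)]
  rw [Finset.sum_image (fun a _ a' _ h => he h)]
  apply Finset.sum_congr rfl
  intro a _
  have : (fun ω => e (f ω)) ⁻¹' {e a} = f ⁻¹' {a} := by
    ext ω; simp [he.eq_iff]
  rw [this]

lemma shannonEntropy_eq_of_determines (f : Ω → α) (g : Ω → β) (φ : α → β) (ψ : β → α)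
    (hφ : ∀ ω, g ω = φ (f ω)) (hψ : ∀ ω, f ω = ψ (g ω)) :
    shannonEntropy μ g = shannonEntropy μ f := by
  have h1 : shannonEntropy μ (fun ω => ((f ω, g ω) : α × β)) = shannonEntropy μ f := by
    have : (fun ω => ((f ω, g ω) : α × β)) = fun ω => ((f ω, φ (f ω)) : α × β) := by
      funext ω; rw [hφ]
    rw [this]
    exact shannonEntropy_comp_inj μ f (fun a => (a, φ a)) (fun a a' h => congrArg Prod.fst h)
  have h2 : shannonEntropy μ (fun ω => ((f ω, g ω) : α × β)) = shannonEntropy μ g := by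
    have : (fun ω => ((f ω, g ω) : α × β)) = fun ω => ((ψ (g ω), g ω) : α × β) := by
      funext ω; rw [← hψ]
    rw [this]
    exact shannonEntropy_comp_inj μ g (fun b => (ψ b, b)) (fun b b' h => congrArg Prod.snd h)
  rw [← h2, h1]

lemma shannonEntropy_const : shannonEntropy μ (fun _ : Ω => ()) = 0 := by
  unfold shannonEntropy
  rw [Fintype.sum_unique]
  have : (fun _ : Ω => ()) ⁻¹' {()} = Set.univ := by ext ω; simp
  rw [this]
  simp [Real.negMulLog]

end EntropyLemmas


lemma negMulLog_sum_le {ι : Type} (s : Finset ι) (q : ι → ℝ) (hq : ∀ i ∈ s, 0 ≤ q i) :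
    Real.negMulLog (∑ i ∈ s, q i) ≤ ∑ i ∈ s, Real.negMulLog (q i) := by
  have hT : ∀ i ∈ s, q i ≤ ∑ j ∈ s, q j := fun i hi => Finset.single_le_sum hq hi
  have h1 : Real.negMulLog (∑ i ∈ s, q i)
      = ∑ i ∈ s, (-(q i) * Real.log (∑ j ∈ s, q j)) := by
    rw [Real.negMulLog, ← Finset.sum_neg_distrib, Finset.sum_mul]
  rw [h1]
  apply Finset.sum_le_sum
  intro i hi
  rw [Real.negMulLog]
  rcases eq_or_lt_of_le (hq i hi) with h0 | h0
  · rw [← h0]; simp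
  · have : Real.log (q i) ≤ Real.log (∑ j ∈ s, q j) := Real.log_le_log h0 (hT i hi)
    nlinarith [this, h0]

lemma submod_sums_fixed {β γ : Type} [Fintype β] [Fintype γ] (q : β → γ → ℝ)
    (hq : ∀ b c, 0 ≤ q b c) :
    Real.negMulLog (∑ b, ∑ c, q b c) + ∑ b, ∑ c, Real.negMulLog (q b c)
      ≤ (∑ b, Real.negMulLog (∑ c, q b c)) + ∑ c, Real.negMulLog (∑ b, q b c) := by
  classical
  set qb : β → ℝ := fun b => ∑ c, q b c with hqb
  set qc : γ → ℝ := fun c => ∑ b, q b c with hqc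
  set T : ℝ := ∑ b, qb b with hT
  have hqb0 : ∀ b, 0 ≤ qb b := fun b => Finset.sum_nonneg fun c _ => hq b c
  have hqc0 : ∀ c, 0 ≤ qc c := fun c => Finset.sum_nonneg fun b _ => hq b c
  have hT0 : 0 ≤ T := Finset.sum_nonneg fun b _ => hqb0 b
  have hTc : T = ∑ c, qc c := by
    rw [hT, hqb, hqc]; exact Finset.sum_comm
  have hqble : ∀ b c, q b c ≤ qb b := fun b c =>
    Finset.single_le_sum (fun c' _ => hq b c') (Finset.mem_univ c)
  have hqcle : ∀ b c, q b c ≤ qc c := fun b c =>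
    Finset.single_le_sum (fun b' _ => hq b' c) (Finset.mem_univ b)
  have hqbT : ∀ b, qb b ≤ T := fun b =>
    Finset.single_le_sum (fun b' _ => hqb0 b') (Finset.mem_univ b)
  -- rewrite everything as double sums
  have e1 : Real.negMulLog T = ∑ b, ∑ c, (-(q b c) * Real.log T) := by
    rw [Real.negMulLog]
    rw [show (-T * Real.log T) = (∑ b, ∑ c, q b c) * (-Real.log T) by
      rw [← hT]; ring]
    rw [Finset.sum_mul]
    congr 1; funext b
    rw [Finset.sum_mul]
    congr 1; funext c; ring
  have e2 : (∑ b, Real.negMulLog (qb b)) = ∑ b, ∑ c, (-(q b c) * Real.log (qb b)) := by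
    apply Finset.sum_congr rfl
    intro b _
    rw [Real.negMulLog, show (-(qb b) * Real.log (qb b)) = qb b * (-Real.log (qb b)) by ring,
      hqb]
    rw [Finset.sum_mul]
    apply Finset.sum_congr rfl; intro c _; ring
  have e3 : (∑ c, Real.negMulLog (qc c)) = ∑ b, ∑ c, (-(q b c) * Real.log (qc c)) := by
    have step : (∑ c, Real.negMulLog (qc c)) = ∑ c, ∑ b, (-(q b c) * Real.log (qc c)) := by
      apply Finset.sum_congr rfl
      intro c _
      rw [Real.negMulLog, show (-(qc c) * Real.log (qc c)) = qc c * (-Real.log (qc c)) by ring,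
        hqc]
      rw [Finset.sum_mul]
      apply Finset.sum_congr rfl; intro b _; ring
    rw [step]
    exact Finset.sum_comm
  have key : ∀ b c, q b c - qb b * qc c / T ≤
      -(q b c) * Real.log (qb b) + (-(q b c) * Real.log (qc c))
        + (q b c * Real.log T + q b c * Real.log (q b c)) := by
    intro b c
    rcases eq_or_lt_of_le (hq b c) with h0 | h0
    · rw [← h0]
      simp only [neg_zero, zero_mul, neg_mul, zero_sub, add_zero, zero_add, mul_zero]
      have : 0 ≤ qb b * qc c / T := div_nonneg (mul_nonneg (hqb0 b) (hqc0 c)) hT0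
      linarith
    · have hb0 : 0 < qb b := lt_of_lt_of_le h0 (hqble b c)
      have hc0 : 0 < qc c := lt_of_lt_of_le h0 (hqcle b c)
      have hT0' : 0 < T := lt_of_lt_of_le hb0 (hqbT b)
      have hr : Real.log (qb b * qc c / (T * q b c)) ≤ qb b * qc c / (T * q b c) - 1 :=
        Real.log_le_sub_one_of_pos (div_pos (mul_pos hb0 hc0) (mul_pos hT0' h0))
      rw [Real.log_div (ne_of_gt (mul_pos hb0 hc0)) (ne_of_gt (mul_pos hT0' h0)), Real.log_mul (ne_of_gt hb0) (ne_of_gt hc0),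
        Real.log_mul (ne_of_gt hT0') (ne_of_gt h0)] at hr
      have hmul := mul_le_mul_of_nonneg_left hr (le_of_lt h0)
      have hq' : q b c * (qb b * qc c / (T * q b c)) = qb b * qc c / T := by
        field_simp
      have hL : q b c * (Real.log (qb b) + Real.log (qc c) - (Real.log T + Real.log (q b c)))
          = q b c * Real.log (qb b) + q b c * Real.log (qc c) - q b c * Real.log T
            - q b c * Real.log (q b c) := by ring
      rw [hL, mul_sub, mul_one, hq'] at hmul
      linarith [hmul]
  have sumkey : (∑ b, ∑ c, (q b c - qb b * qc c / T)) ≤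
      ∑ b, ∑ c, (-(q b c) * Real.log (qb b) + (-(q b c) * Real.log (qc c))
        + (q b c * Real.log T + q b c * Real.log (q b c))) := by
    apply Finset.sum_le_sum; intro b _
    apply Finset.sum_le_sum; intro c _
    exact key b c
  have h2 : (∑ b, ∑ c, (qb b * qc c / T)) = T * T / T := by
    have hstep : ∀ b, (∑ c, (qb b * qc c / T)) = qb b * T / T := by
      intro b; rw [← Finset.sum_div, ← Finset.mul_sum, ← hTc]
    rw [Finset.sum_congr rfl (fun b _ => hstep b), ← Finset.sum_div, ← Finset.sum_mul, ← hT]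
  have h1 : ∀ b, (∑ c, (q b c - qb b * qc c / T)) = qb b - ∑ c, (qb b * qc c / T) := by
    intro b; rw [Finset.sum_sub_distrib]
  have hzero : (∑ b, ∑ c, (q b c - qb b * qc c / T)) = 0 := by
    rw [Finset.sum_congr rfl (fun b _ => h1 b), Finset.sum_sub_distrib, ← hT, h2]
    rcases eq_or_lt_of_le hT0 with h | h
    · rw [← h]; simp
    · field_simp; ring
  -- assemble
  have expand : ∀ b c, (-(q b c) * Real.log (qb b) + (-(q b c) * Real.log (qc c))
        + (q b c * Real.log T + q b c * Real.log (q b c)))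
      = (-(q b c) * Real.log (qb b)) + (-(q b c) * Real.log (qc c))
        - (-(q b c) * Real.log T) - Real.negMulLog (q b c) := by
    intro b c; rw [Real.negMulLog]; ring
  have final : 0 ≤ (∑ b, ∑ c, (-(q b c) * Real.log (qb b)))
      + (∑ b, ∑ c, (-(q b c) * Real.log (qc c)))
      - (∑ b, ∑ c, (-(q b c) * Real.log T))
      - (∑ b, ∑ c, Real.negMulLog (q b c)) := by
    calc (0:ℝ) = ∑ b, ∑ c, (q b c - qb b * qc c / T) := hzero.symm
    _ ≤ ∑ b, ∑ c, (-(q b c) * Real.log (qb b) + (-(q b c) * Real.log (qc c))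
        + (q b c * Real.log T + q b c * Real.log (q b c))) := sumkey
    _ = (∑ b, ∑ c, (-(q b c) * Real.log (qb b)))
      + (∑ b, ∑ c, (-(q b c) * Real.log (qc c)))
      - (∑ b, ∑ c, (-(q b c) * Real.log T))
      - (∑ b, ∑ c, Real.negMulLog (q b c)) := by
        rw [← Finset.sum_add_distrib, ← Finset.sum_sub_distrib, ← Finset.sum_sub_distrib]
        apply Finset.sum_congr rfl; intro b _
        rw [← Finset.sum_add_distrib, ← Finset.sum_sub_distrib, ← Finset.sum_sub_distrib]
        apply Finset.sum_congr rfl; intro c _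
        exact expand b c
  rw [e1, e2, e3]
  linarith [final]

section MeasureEntropy

open MeasureTheory

variable {Ω : Type} [MeasurableSpace Ω] (μ : Measure Ω) [IsProbabilityMeasure μ]
variable {α β γ : Type} [Fintype α] [Fintype β] [Fintype γ]

lemma measure_eq_sum_inter (E : Set Ω) (hE : MeasurableSet E) (g : Ω → β)
    (hg : ∀ b, MeasurableSet (g ⁻¹' {b})) :
    (μ E).toReal = ∑ b : β, (μ (E ∩ g ⁻¹' {b})).toReal := by
  classical
  have hd : ((Finset.univ : Finset β) : Set β).PairwiseDisjoint (fun b => E ∩ g ⁻¹' {b}) := by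
    intro b _ b' _ hbb'
    refine Set.disjoint_left.2 ?_
    rintro ω ⟨-, hb⟩ ⟨-, hb'⟩
    simp only [Set.mem_preimage, Set.mem_singleton_iff] at hb hb'
    exact hbb' (by rw [← hb, ← hb'])
  have hU : E = ⋃ b ∈ (Finset.univ : Finset β), (E ∩ g ⁻¹' {b}) := by
    ext ω; simp
  have := measure_biUnion_finset (μ := μ) hd (fun b _ => hE.inter (hg b))
  rw [← hU] at this
  rw [this, ENNReal.toReal_sum (fun b _ => measure_ne_top μ _)]

lemma shannonEntropy_le_pair (f : Ω → α) (g : Ω → β)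
    (hf : ∀ a, MeasurableSet (f ⁻¹' {a})) (hg : ∀ b, MeasurableSet (g ⁻¹' {b})) :
    shannonEntropy μ f ≤ shannonEntropy μ (fun ω => (f ω, g ω)) := by
  unfold shannonEntropy
  rw [Fintype.sum_prod_type]
  apply Finset.sum_le_sum
  intro a _
  have hpre : ∀ b, (fun ω => (f ω, g ω)) ⁻¹' {(a, b)} = f ⁻¹' {a} ∩ g ⁻¹' {b} := by
    intro b; ext ω; simp [Prod.ext_iff]
  have hsum : (μ (f ⁻¹' {a})).toReal
      = ∑ b, (μ ((fun ω => (f ω, g ω)) ⁻¹' {(a, b)})).toReal := by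
    rw [measure_eq_sum_inter μ _ (hf a) g hg]
    exact Finset.sum_congr rfl fun b _ => by rw [hpre b]
  rw [hsum]
  exact negMulLog_sum_le _ _ (fun b _ => ENNReal.toReal_nonneg)

lemma shannonEntropy_submod (f : Ω → α) (g : Ω → β) (h : Ω → γ)
    (hf : ∀ a, MeasurableSet (f ⁻¹' {a})) (hg : ∀ b, MeasurableSet (g ⁻¹' {b}))
    (hh : ∀ c, MeasurableSet (h ⁻¹' {c})) :
    shannonEntropy μ f + shannonEntropy μ (fun ω => (f ω, g ω, h ω))
      ≤ shannonEntropy μ (fun ω => (f ω, g ω)) + shannonEntropy μ (fun ω => (f ω, h ω)) := by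
  classical
  set p : α → β → γ → ℝ :=
    fun a b c => (μ (f ⁻¹' {a} ∩ g ⁻¹' {b} ∩ h ⁻¹' {c})).toReal with hp
  have hp0 : ∀ a b c, 0 ≤ p a b c := fun _ _ _ => ENNReal.toReal_nonneg
  have ef : shannonEntropy μ f = ∑ a, Real.negMulLog (∑ b, ∑ c, p a b c) := by
    unfold shannonEntropy
    apply Finset.sum_congr rfl
    intro a _
    congr 1
    rw [measure_eq_sum_inter μ _ (hf a) g hg]
    apply Finset.sum_congr rfl
    intro b _
    rw [measure_eq_sum_inter μ _ ((hf a).inter (hg b)) h hh]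
  have efg : shannonEntropy μ (fun ω => (f ω, g ω))
      = ∑ a, ∑ b, Real.negMulLog (∑ c, p a b c) := by
    unfold shannonEntropy
    rw [Fintype.sum_prod_type]
    apply Finset.sum_congr rfl; intro a _
    apply Finset.sum_congr rfl; intro b _
    congr 1
    have hpre : (fun ω => (f ω, g ω)) ⁻¹' {(a, b)} = f ⁻¹' {a} ∩ g ⁻¹' {b} := by
      ext ω; simp [Prod.ext_iff]
    rw [hpre, measure_eq_sum_inter μ _ ((hf a).inter (hg b)) h hh]
  have efh : shannonEntropy μ (fun ω => (f ω, h ω))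
      = ∑ a, ∑ c, Real.negMulLog (∑ b, p a b c) := by
    unfold shannonEntropy
    rw [Fintype.sum_prod_type]
    apply Finset.sum_congr rfl; intro a _
    apply Finset.sum_congr rfl; intro c _
    congr 1
    have hpre : (fun ω => (f ω, h ω)) ⁻¹' {(a, c)} = f ⁻¹' {a} ∩ h ⁻¹' {c} := by
      ext ω; simp [Prod.ext_iff]
    rw [hpre, measure_eq_sum_inter μ _ ((hf a).inter (hh c)) g hg]
    apply Finset.sum_congr rfl
    intro b _
    congr 2
    rw [Set.inter_right_comm]
  have efgh : shannonEntropy μ (fun ω => (f ω, g ω, h ω))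
      = ∑ a, ∑ b, ∑ c, Real.negMulLog (p a b c) := by
    unfold shannonEntropy
    rw [Fintype.sum_prod_type]
    apply Finset.sum_congr rfl; intro a _
    rw [Fintype.sum_prod_type]
    apply Finset.sum_congr rfl; intro b _
    apply Finset.sum_congr rfl; intro c _
    congr 1
    have hpre : (fun ω => (f ω, g ω, h ω)) ⁻¹' {(a, b, c)}
        = f ⁻¹' {a} ∩ g ⁻¹' {b} ∩ h ⁻¹' {c} := by
      ext ω
      simp only [Set.mem_preimage, Set.mem_singleton_iff, Prod.ext_iff, Set.mem_inter_iff]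
      tauto
    rw [hpre]
  rw [ef, efg, efh, efgh, ← Finset.sum_add_distrib, ← Finset.sum_add_distrib]
  apply Finset.sum_le_sum
  intro a _
  exact submod_sums_fixed (p a) (hp0 a)

lemma meas_pair {f : Ω → α} {g : Ω → β}
    (hf : ∀ a, MeasurableSet (f ⁻¹' {a})) (hg : ∀ b, MeasurableSet (g ⁻¹' {b})) :
    ∀ x : α × β, MeasurableSet ((fun ω => (f ω, g ω)) ⁻¹' {x}) := by
  rintro ⟨a, b⟩
  have h : (fun ω => (f ω, g ω)) ⁻¹' {(a, b)} = f ⁻¹' {a} ∩ g ⁻¹' {b} := by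
    ext ω; simp [Prod.ext_iff]
  rw [h]
  exact (hf a).inter (hg b)

lemma shannonEntropy_pair_le (g : Ω → β) (h : Ω → γ)
    (hg : ∀ b, MeasurableSet (g ⁻¹' {b})) (hh : ∀ c, MeasurableSet (h ⁻¹' {c})) :
    shannonEntropy μ (fun ω => (g ω, h ω)) ≤ shannonEntropy μ g + shannonEntropy μ h := by
  have hu : ∀ a : Unit, MeasurableSet ((fun _ : Ω => ()) ⁻¹' {a}) := by
    intro a
    have : ((fun _ : Ω => ()) ⁻¹' {a}) = Set.univ := by ext ω; simp
    rw [this]; exact MeasurableSet.univ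
  have key := shannonEntropy_submod μ (fun _ : Ω => ()) g h hu hg hh
  have e1 : shannonEntropy μ (fun ω : Ω => ((), g ω)) = shannonEntropy μ g :=
    shannonEntropy_eq_of_determines μ g (fun ω => ((), g ω))
      (fun b => ((), b)) Prod.snd (fun ω => rfl) (fun ω => rfl)
  have e2 : shannonEntropy μ (fun ω : Ω => ((), h ω)) = shannonEntropy μ h :=
    shannonEntropy_eq_of_determines μ h (fun ω => ((), h ω))
      (fun c => ((), c)) Prod.snd (fun ω => rfl) (fun ω => rfl)
  have e3 : shannonEntropy μ (fun ω : Ω => ((), g ω, h ω))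
      = shannonEntropy μ (fun ω => (g ω, h ω)) :=
    shannonEntropy_eq_of_determines μ (fun ω => (g ω, h ω)) (fun ω => ((), g ω, h ω))
      (fun x => ((), x)) Prod.snd (fun ω => rfl) (fun ω => rfl)
  have e4 : shannonEntropy μ (fun _ : Ω => ()) = 0 := shannonEntropy_const μ
  rw [e1, e2, e3, e4] at key
  linarith

end MeasureEntropy

/-- A family of random variables on a common probability space: one (finite-valued)
random variable `secret` for the secret, and one random variable `share p` for the
share of each participant `p`. -/
structure Scheme (P : Type) [Fintype P] [DecidableEq P] where
  (Ω : Type)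
  [mΩ : MeasurableSpace Ω]
  (μ : Measure Ω)
  [prob : IsProbabilityMeasure μ]
  (SecT : Type)
  [secFin : Fintype SecT]
  (ShT : P → Type)
  [shFin : ∀ p, Fintype (ShT p)]
  (secret : Ω → SecT)
  (share : (p : P) → Ω → ShT p)
  (secret_meas : ∀ s : Set SecT, MeasurableSet (secret ⁻¹' s))
  (share_meas : ∀ p, ∀ s : Set (ShT p), MeasurableSet (share p ⁻¹' s))

namespace Scheme

variable {P : Type} [Fintype P] [DecidableEq P]

/-- `H(S)`: the entropy of the secret. -/
noncomputable def Hsec (S : Scheme P) : ℝ :=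
  letI := S.mΩ; letI := S.secFin
  shannonEntropy S.μ S.secret

/-- `H(X)`: the joint entropy of the shares of the participants in `X`. -/
noncomputable def Hset (S : Scheme P) (X : Finset P) : ℝ :=
  letI := S.mΩ; letI := S.shFin
  shannonEntropy S.μ (fun ω => fun p : {y // y ∈ X} => S.share p.1 ω)

/-- `H(X ∪ {S})`: the joint entropy of the shares of the participants in `X`
together with the secret. -/
noncomputable def HsetS (S : Scheme P) (X : Finset P) : ℝ :=
  letI := S.mΩ; letI := S.secFin; letI := S.shFin
  shannonEntropy S.μ (fun ω => ((fun p : {y // y ∈ X} => S.share p.1 ω), S.secret ω))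

/-- The normalized entropy `h(X) = H(X)/H(S)`. -/
noncomputable def hset (S : Scheme P) (X : Finset P) : ℝ := S.Hset X / S.Hsec

/-- The conditional normalized entropy `h(X|Y) = h(X ∪ Y) − h(Y)`. -/
noncomputable def hcond (S : Scheme P) (X Y : Finset P) : ℝ :=
  S.hset (X ∪ Y) - S.hset Y

/-- `Σ` is a perfect secret sharing scheme for the access structure `Γ`:
the conditional entropy `H(S|X) = H(X ∪ {S}) − H(X)` equals `0` for every
qualified set `X` and equals `H(S)` for every unqualified set `X`. -/
def IsPerfect (S : Scheme P) (Γ : Finset P → Prop) : Prop :=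
  (∀ X : Finset P, Γ X → S.HsetS X - S.Hset X = 0) ∧
  (∀ X : Finset P, ¬ Γ X → S.HsetS X - S.Hset X = S.Hsec)

end Scheme
namespace Scheme

variable {P : Type} [Fintype P] [DecidableEq P]

/-- The joint random variable of the shares in `X`. -/
def shf (S : Scheme P) (X : Finset P) : S.Ω → ((p : {y // y ∈ X}) → S.ShT p.1) :=
  fun ω p => S.share p.1 ω

/-- Restriction of a joint share vector. -/
def restr (S : Scheme P) {A B : Finset P} (hAB : A ⊆ B)
    (F : (p : {y // y ∈ B}) → S.ShT p.1) : (p : {y // y ∈ A}) → S.ShT p.1 :=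
  fun p => F ⟨p.1, hAB p.2⟩

/-- Reconstruction of a joint share vector on `insert v A`. -/
def recon (S : Scheme P) {A : Finset P} {v : P}
    (F : (p : {y // y ∈ A}) → S.ShT p.1) (t : S.ShT v) :
    (q : {y // y ∈ insert v A}) → S.ShT q.1 :=
  fun q => if hq : q.1 ∈ A then F ⟨q.1, hq⟩
    else cast (congrArg S.ShT ((Finset.mem_insert.mp q.2).resolve_right hq).symm) t

lemma recon_shf (S : Scheme P) (A : Finset P) (v : P) (ω : S.Ω) :
    S.shf (insert v A) ω = S.recon (S.shf A ω) (S.share v ω) := by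
  funext q
  obtain ⟨a, ha⟩ := q
  by_cases hq : a ∈ A
  · simp [shf, recon, hq]
  · have hv : a = v := (Finset.mem_insert.mp ha).resolve_right hq
    subst hv
    simp [shf, recon, hq]

lemma meas_shf (S : Scheme P) (X : Finset P) (F : (p : {y // y ∈ X}) → S.ShT p.1) :
    MeasurableSet[S.mΩ] ((S.shf X) ⁻¹' {F}) := by
  have h : (S.shf X) ⁻¹' {F} = ⋂ p : {y // y ∈ X}, S.share p.1 ⁻¹' {F p} := by
    ext ω
    simp only [Set.mem_preimage, Set.mem_singleton_iff, Set.mem_iInter, shf, funext_iff]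
  rw [h]
  exact MeasurableSet.iInter (fun p => S.share_meas p.1 {F p})

section Plumbing

variable (S : Scheme P)

lemma Hset_le_add (U : Finset P) (v : P) :
    S.Hset (insert v U) ≤ S.Hset U + S.Hset {v} := by
  letI := S.mΩ; letI := S.prob; letI := S.shFin; letI := S.secFin
  have hU : ∀ F, MeasurableSet ((S.shf U) ⁻¹' {F}) := S.meas_shf U
  have hv : ∀ t, MeasurableSet ((S.share v) ⁻¹' {t}) := fun t => S.share_meas v {t}
  have e1 : S.Hset (insert v U)
      = shannonEntropy S.μ (fun ω => (S.shf U ω, S.share v ω)) := by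
    show shannonEntropy S.μ (S.shf (insert v U)) = _
    refine (shannonEntropy_eq_of_determines S.μ (S.shf (insert v U))
      (fun ω => (S.shf U ω, S.share v ω))
      (fun F => (S.restr (Finset.subset_insert v U) F, F ⟨v, Finset.mem_insert_self v U⟩))
      (fun G => S.recon G.1 G.2) (fun ω => rfl) (fun ω => S.recon_shf U v ω)).symm
  have e2 : S.Hset {v} = shannonEntropy S.μ (S.share v) := by
    show shannonEntropy S.μ (S.shf {v}) = _
    refine shannonEntropy_eq_of_determines S.μ (S.share v) (S.shf {v})
      (fun t => fun q => cast (congrArg S.ShT (Finset.mem_singleton.mp q.2).symm) t)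
      (fun F => F ⟨v, Finset.mem_singleton_self v⟩) ?_ (fun ω => rfl)
    intro ω
    funext q
    obtain ⟨a, ha⟩ := q
    have hv' : a = v := Finset.mem_singleton.mp ha
    subst hv'
    rfl
  rw [e1, e2]
  have e3 : S.Hset U = shannonEntropy S.μ (S.shf U) := rfl
  rw [e3]
  exact shannonEntropy_pair_le S.μ (S.shf U) (S.share v) hU hv

lemma HsetS_mono {U V : Finset P} (hUV : U ⊆ V) : S.HsetS U ≤ S.HsetS V := by
  letI := S.mΩ; letI := S.prob; letI := S.shFin; letI := S.secFin
  have hf : ∀ x, MeasurableSet ((fun ω => (S.shf U ω, S.secret ω)) ⁻¹' {x}) :=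
    meas_pair (fun F => S.meas_shf U F) (fun s => S.secret_meas {s})
  have hg : ∀ F, MeasurableSet ((S.shf V) ⁻¹' {F}) := S.meas_shf V
  have e1 : S.HsetS V = shannonEntropy S.μ
      (fun ω => ((S.shf U ω, S.secret ω), S.shf V ω)) := by
    show shannonEntropy S.μ (fun ω => (S.shf V ω, S.secret ω)) = _
    refine (shannonEntropy_eq_of_determines S.μ
      (fun ω => (S.shf V ω, S.secret ω))
      (fun ω => ((S.shf U ω, S.secret ω), S.shf V ω))
      (fun Fs => ((S.restr hUV Fs.1, Fs.2), Fs.1))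
      (fun G => (G.2, G.1.2)) (fun ω => rfl) (fun ω => rfl)).symm
  rw [e1]
  exact shannonEntropy_le_pair S.μ _ _ hf hg

lemma HsetS_submod {A B : Finset P} (hAB : A ⊆ B) (v : P) :
    S.HsetS (insert v B) + S.HsetS A ≤ S.HsetS (insert v A) + S.HsetS B := by
  letI := S.mΩ; letI := S.prob; letI := S.shFin; letI := S.secFin
  have hf : ∀ x, MeasurableSet ((fun ω => (S.shf A ω, S.secret ω)) ⁻¹' {x}) :=
    meas_pair (fun F => S.meas_shf A F) (fun s => S.secret_meas {s})
  have hg : ∀ t, MeasurableSet ((S.share v) ⁻¹' {t}) := fun t => S.share_meas v {t}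
  have hh : ∀ F, MeasurableSet ((S.shf B) ⁻¹' {F}) := S.meas_shf B
  have key := shannonEntropy_submod S.μ (fun ω => (S.shf A ω, S.secret ω))
    (S.share v) (S.shf B) hf hg hh
  have eA : S.HsetS A = shannonEntropy S.μ (fun ω => (S.shf A ω, S.secret ω)) := rfl
  have eAv : S.HsetS (insert v A) = shannonEntropy S.μ
      (fun ω => ((S.shf A ω, S.secret ω), S.share v ω)) := by
    show shannonEntropy S.μ (fun ω => (S.shf (insert v A) ω, S.secret ω)) = _
    refine (shannonEntropy_eq_of_determines S.μ
      (fun ω => (S.shf (insert v A) ω, S.secret ω))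
      (fun ω => ((S.shf A ω, S.secret ω), S.share v ω))
      (fun Fs => ((S.restr (Finset.subset_insert v A) Fs.1, Fs.2),
        Fs.1 ⟨v, Finset.mem_insert_self v A⟩))
      (fun G => (S.recon G.1.1 G.2, G.1.2)) (fun ω => rfl) ?_).symm
    intro ω
    dsimp only
    rw [S.recon_shf A v ω]
  have eB : S.HsetS B = shannonEntropy S.μ
      (fun ω => ((S.shf A ω, S.secret ω), S.shf B ω)) := by
    show shannonEntropy S.μ (fun ω => (S.shf B ω, S.secret ω)) = _
    refine (shannonEntropy_eq_of_determines S.μ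
      (fun ω => (S.shf B ω, S.secret ω))
      (fun ω => ((S.shf A ω, S.secret ω), S.shf B ω))
      (fun Fs => ((S.restr hAB Fs.1, Fs.2), Fs.1))
      (fun G => (G.2, G.1.2)) (fun ω => rfl) (fun ω => rfl)).symm
  have eBv : S.HsetS (insert v B) = shannonEntropy S.μ
      (fun ω => ((S.shf A ω, S.secret ω), S.share v ω, S.shf B ω)) := by
    show shannonEntropy S.μ (fun ω => (S.shf (insert v B) ω, S.secret ω)) = _
    refine (shannonEntropy_eq_of_determines S.μ
      (fun ω => (S.shf (insert v B) ω, S.secret ω))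
      (fun ω => ((S.shf A ω, S.secret ω), S.share v ω, S.shf B ω))
      (fun Fs => ((S.restr (hAB.trans (Finset.subset_insert v B)) Fs.1, Fs.2),
        (Fs.1 ⟨v, Finset.mem_insert_self v B⟩, S.restr (Finset.subset_insert v B) Fs.1)))
      (fun G => (S.recon G.2.2 G.2.1, G.1.2)) (fun ω => rfl) ?_).symm
    intro ω
    dsimp only
    rw [S.recon_shf B v ω]
  rw [eA, eAv, eB, eBv]
  linarith [key]

end Plumbing

end Scheme

/-- The four Vamos pairs `A = {v₁,v₂}`, `B = {v₃,v₄}`, `C = {v₅,v₆}`, `D = {v₇,v₈}`,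
where participant `vᵢ` is represented by `(i-1 : Fin 8)`. -/
def pairA : Finset (Fin 8) := {0, 1}
def pairB : Finset (Fin 8) := {2, 3}
def pairC : Finset (Fin 8) := {4, 5}
def pairD : Finset (Fin 8) := {6, 7}

/-- `X` is one of the four Vamos pairs. -/
def IsVamosPair (X : Finset (Fin 8)) : Prop :=
  X = pairA ∨ X = pairB ∨ X = pairC ∨ X = pairD

/-- The dependent sets of the Vamos matroid: the five special four-element sets
`AB`, `AC`, `BC`, `BD`, `CD`, and all sets with at least five elements. -/
def VamosDep (X : Finset (Fin 8)) : Prop :=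
  X = pairA ∪ pairB ∨ X = pairA ∪ pairC ∨ X = pairB ∪ pairC ∨
    X = pairB ∪ pairD ∨ X = pairC ∪ pairD ∨ 5 ≤ X.card

/-- The circuits of the Vamos matroid: minimal dependent sets. -/
def VamosCircuit (X : Finset (Fin 8)) : Prop :=
  VamosDep X ∧ ∀ Y ⊂ X, ¬ VamosDep Y

/-- The access structure `Γₓ` induced by the Vamos matroid with dealer `x`
(the dealer is regarded as a participant who is individually qualified):
a set is qualified iff it contains a minimal qualified set, the minimal
qualified sets being `{x}` and the sets `M ⊆ Q \ {x}` with `M ∪ {x}` a circuit. -/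
def VamosQualified (x : Fin 8) (Y : Finset (Fin 8)) : Prop :=
  x ∈ Y ∨ ∃ M ⊆ Y, x ∉ M ∧ VamosCircuit (insert x M)

/-- `λ = (max₁≤ᵢ≤₈ h({vᵢ})) − 1`. -/
noncomputable def Scheme.lam (S : Scheme (Fin 8)) : ℝ :=
  (Finset.univ.sup' Finset.univ_nonempty fun i : Fin 8 => S.hset {i}) - 1

/-- The information rate `ρ(Σ) = min₁≤ᵢ≤₈ H(S)/H(vᵢ)` of a scheme. -/
noncomputable def Scheme.rho (S : Scheme (Fin 8)) : ℝ :=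
  Finset.univ.inf' Finset.univ_nonempty fun i : Fin 8 => S.Hsec / S.Hset {i}

namespace Scheme

variable {P : Type} [Fintype P] [DecidableEq P]

lemma master (S : Scheme P) (Γ : Finset P → Prop) (hperf : S.IsPerfect Γ)
    (X A : Finset P) (y1 y2 w : P)
    (hA : A ⊆ insert y1 (insert w X))
    (q1 : ¬ Γ (insert y2 (insert y1 X)))
    (q3 : Γ (insert y1 (insert w X)))
    (q2 : Γ (insert y2 (insert y1 (insert w X))))
    (q5 : ¬ Γ A) (q6 : Γ (insert y2 A)) :
    S.Hset (insert y2 (insert y1 X)) - S.Hset X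
      ≤ S.Hset {w} + S.Hset {y1} + S.Hset {y2} - 2 * S.Hsec := by
  have p1 := hperf.2 _ q1
  have p2 := hperf.1 _ q2
  have p3 := hperf.1 _ q3
  have p5 := hperf.2 _ q5
  have p6 := hperf.1 _ q6
  have sub := S.HsetS_submod hA y2
  have mono : S.HsetS (insert y2 (insert y1 X))
      ≤ S.HsetS (insert y2 (insert y1 (insert w X))) :=
    S.HsetS_mono (Finset.insert_subset_insert y2
      (Finset.insert_subset_insert y1 (Finset.subset_insert w X)))
  have a1 := S.Hset_le_add X w
  have b1 := S.Hset_le_add (insert w X) y1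
  have c1 := S.Hset_le_add A y2
  linarith

end Scheme

section Vamos

set_option maxRecDepth 40000

instance : DecidablePred VamosDep := fun X => by unfold VamosDep; infer_instance

lemma circuit_of_special (C : Finset (Fin 8)) (hdep : VamosDep C) (hc : C.card = 4) :
    VamosCircuit C := by
  refine ⟨hdep, ?_⟩
  intro Y hY hd
  have h4 : Y.card < 4 := hc ▸ Finset.card_lt_card hY
  rcases hd with rfl | rfl | rfl | rfl | rfl | h5
  · exact absurd h4 (by decide)
  · exact absurd h4 (by decide)
  · exact absurd h4 (by decide)
  · exact absurd h4 (by decide)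
  · exact absurd h4 (by decide)
  · omega

lemma circuit_of_card5 (C : Finset (Fin 8)) (hc : C.card = 5)
    (h1 : ¬ pairA ∪ pairB ⊆ C) (h2 : ¬ pairA ∪ pairC ⊆ C) (h3 : ¬ pairB ∪ pairC ⊆ C)
    (h4 : ¬ pairB ∪ pairD ⊆ C) (h5 : ¬ pairC ∪ pairD ⊆ C) : VamosCircuit C := by
  refine ⟨Or.inr (Or.inr (Or.inr (Or.inr (Or.inr hc.ge)))), ?_⟩
  intro Y hY hd
  have hlt : Y.card < 5 := hc ▸ Finset.card_lt_card hY
  rcases hd with rfl | rfl | rfl | rfl | rfl | h5'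
  · exact h1 hY.subset
  · exact h2 hY.subset
  · exact h3 hY.subset
  · exact h4 hY.subset
  · exact h5 hY.subset
  · omega

/-- The partner of a participant within its Vamos pair. -/
def mate (x : Fin 8) : Fin 8 :=
  if x = 0 then 1 else if x = 1 then 0 else if x = 2 then 3 else if x = 3 then 2
    else if x = 4 then 5 else if x = 5 then 4 else if x = 6 then 7 else 6

lemma mate_ne (x : Fin 8) : mate x ≠ x := by fin_cases x <;> decide

lemma mate_mem (x : Fin 8) :
    (x ∈ pairA ∪ pairB → mate x ∈ pairA ∪ pairB) ∧
    (x ∈ pairA ∪ pairC → mate x ∈ pairA ∪ pairC) ∧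
    (x ∈ pairB ∪ pairC → mate x ∈ pairB ∪ pairC) ∧
    (x ∈ pairB ∪ pairD → mate x ∈ pairB ∪ pairD) ∧
    (x ∈ pairC ∪ pairD → mate x ∈ pairC ∪ pairD) := by fin_cases x <;> decide

lemma notdep_of (x : Fin 8) (M : Finset (Fin 8)) (hcard : M.card ≤ 3) (hm : mate x ∉ M) :
    ¬ VamosDep (insert x M) := by
  intro hd
  have hx : x ∈ insert x M := Finset.mem_insert_self x M
  have hmx : mate x ∉ insert x M := by
    intro h
    rcases Finset.mem_insert.mp h with h' | h'
    · exact mate_ne x h'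
    · exact hm h'
  rcases hd with h | h | h | h | h | h5
  · rw [h] at hx hmx; exact hmx ((mate_mem x).1 hx)
  · rw [h] at hx hmx; exact hmx ((mate_mem x).2.1 hx)
  · rw [h] at hx hmx; exact hmx ((mate_mem x).2.2.1 hx)
  · rw [h] at hx hmx; exact hmx ((mate_mem x).2.2.2.1 hx)
  · rw [h] at hx hmx; exact hmx ((mate_mem x).2.2.2.2 hx)
  · have := Finset.card_insert_le x M; omega

lemma not_qualified_gen (x : Fin 8) (T : Finset (Fin 8)) (hxT : x ∉ T) (hmT : mate x ∉ T)
    (hT4 : T.card ≤ 4) (hTdep : T.card = 4 → VamosDep T) : ¬ VamosQualified x T := by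
  rintro (h | ⟨M, hM, hxM, hc⟩)
  · exact hxT h
  · by_cases hMT : M = T
    · subst hMT
      rcases Nat.lt_or_ge M.card 4 with h4 | h4
      · exact notdep_of x M (by omega) hmT hc.1
      · exact hc.2 M (Finset.ssubset_insert hxM) (hTdep (by omega))
    · have hss : M ⊂ T := lt_of_le_of_ne hM hMT
      have hcard : M.card < T.card := Finset.card_lt_card hss
      exact notdep_of x M (by omega) (fun hmm => hmT (hM hmm)) hc.1

/-- None of the five special `4`-sets is contained in `C`. -/
def NoSpecialSubset (C : Finset (Fin 8)) : Prop :=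
  ¬(pairA ∪ pairB ⊆ C) ∧ ¬(pairA ∪ pairC ⊆ C) ∧ ¬(pairB ∪ pairC ⊆ C) ∧
    ¬(pairB ∪ pairD ⊆ C) ∧ ¬(pairC ∪ pairD ⊆ C)

instance : DecidablePred NoSpecialSubset := fun C => by unfold NoSpecialSubset; infer_instance

lemma not_qualified_nosuper (x : Fin 8) (T : Finset (Fin 8)) (hxT : x ∉ T)
    (hT3 : T.card ≤ 3) (hns : NoSpecialSubset (insert x T)) : ¬ VamosQualified x T := by
  obtain ⟨hn1, hn2, hn3, hn4, hn5⟩ := hns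
  rintro (h | ⟨M, hM, hxM, hc⟩)
  · exact hxT h
  · have hsub : insert x M ⊆ insert x T := Finset.insert_subset_insert x hM
    have hMc : M.card ≤ T.card := Finset.card_le_card hM
    rcases hc.1 with h | h | h | h | h | h5'
    · exact hn1 (h ▸ hsub)
    · exact hn2 (h ▸ hsub)
    · exact hn3 (h ▸ hsub)
    · exact hn4 (h ▸ hsub)
    · exact hn5 (h ▸ hsub)
    · have := Finset.card_insert_le x M; omega

/-- A witness set `M` such that `insert x M` is a circuit, certified cheaply. -/
def GoodM (x : Fin 8) (M : Finset (Fin 8)) : Prop :=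
  x ∉ M ∧ ((VamosDep (insert x M) ∧ (insert x M).card = 4) ∨
    ((insert x M).card = 5 ∧ ¬(pairA ∪ pairB ⊆ insert x M) ∧ ¬(pairA ∪ pairC ⊆ insert x M) ∧
      ¬(pairB ∪ pairC ⊆ insert x M) ∧ ¬(pairB ∪ pairD ⊆ insert x M) ∧
      ¬(pairC ∪ pairD ⊆ insert x M)))

instance (x : Fin 8) : DecidablePred (GoodM x) := fun M => by unfold GoodM; infer_instance

/-- One of the listed candidates is a qualifying witness inside `T`. -/
def QualWitness (x : Fin 8) (T : Finset (Fin 8)) (L : List (Finset (Fin 8))) : Prop :=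
  ∃ M ∈ L, M ⊆ T ∧ GoodM x M

instance (x : Fin 8) (T : Finset (Fin 8)) (L : List (Finset (Fin 8))) :
    Decidable (QualWitness x T L) := by unfold QualWitness; infer_instance

lemma qual_of_witness (x : Fin 8) (T : Finset (Fin 8)) (L : List (Finset (Fin 8)))
    (h : QualWitness x T L) : VamosQualified x T := by
  obtain ⟨M, _, hMT, hxM, hg⟩ := h
  refine Or.inr ⟨M, hMT, hxM, ?_⟩
  rcases hg with ⟨hdep, hc⟩ | ⟨hc, h1, h2, h3, h4, h5⟩
  · exact circuit_of_special _ hdep hc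
  · exact circuit_of_card5 _ hc h1 h2 h3 h4 h5

lemma big_case (S : Scheme (Fin 8)) (x : Fin 8) (hperf : S.IsPerfect (VamosQualified x))
    (hpos : 0 < S.Hsec) (X Y : Finset (Fin 8)) (y1 y2 w x1 : Fin 8)
    (hYX : Y ∪ X = insert y2 (insert y1 X))
    (hA : ({x1, w, y1} : Finset (Fin 8)) ⊆ insert y1 (insert w X))
    (q1 : ¬ VamosQualified x (insert y2 (insert y1 X)))
    (q3 : VamosQualified x (insert y1 (insert w X)))
    (q2 : VamosQualified x (insert y2 (insert y1 (insert w X))))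
    (q5 : ¬ VamosQualified x ({x1, w, y1} : Finset (Fin 8)))
    (q6 : VamosQualified x (insert y2 ({x1, w, y1} : Finset (Fin 8)))) :
    S.hcond Y X ≤ 1 + 3 * S.lam := by
  have key := S.master (VamosQualified x) hperf X {x1, w, y1} y1 y2 w hA q1 q3 q2 q5 q6
  have hsing : ∀ v : Fin 8, S.Hset {v} ≤ (S.lam + 1) * S.Hsec := by
    intro v
    have h1 : S.hset {v} ≤ Finset.univ.sup' Finset.univ_nonempty (fun i : Fin 8 => S.hset {i}) :=
      Finset.le_sup' (fun i : Fin 8 => S.hset {i}) (Finset.mem_univ v)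
    have h2 : S.lam + 1 = Finset.univ.sup' Finset.univ_nonempty (fun i : Fin 8 => S.hset {i}) := by
      unfold Scheme.lam; ring
    rw [← h2] at h1
    unfold Scheme.hset at h1
    calc S.Hset {v} = S.Hset {v} / S.Hsec * S.Hsec := by field_simp
    _ ≤ (S.lam + 1) * S.Hsec := mul_le_mul_of_nonneg_right h1 (le_of_lt hpos)
  unfold Scheme.hcond Scheme.hset
  rw [hYX, div_sub_div_same, div_le_iff₀ hpos]
  have hrhs : (1 + 3 * S.lam) * S.Hsec = 3 * ((S.lam + 1) * S.Hsec) - 2 * S.Hsec := by ring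
  rw [hrhs]
  linarith [key, hsing w, hsing y1, hsing y2]

/-- The first element of a Vamos pair. -/
def elt1 (T : Finset (Fin 8)) : Fin 8 :=
  if 0 ∈ T then 0 else if 2 ∈ T then 2 else if 4 ∈ T then 4 else 6

/-- The second element of a Vamos pair. -/
def elt2 (T : Finset (Fin 8)) : Fin 8 :=
  if 1 ∈ T then 1 else if 3 ∈ T then 3 else if 5 ∈ T then 5 else 7

lemma big_case' (S : Scheme (Fin 8)) (x : Fin 8) (hperf : S.IsPerfect (VamosQualified x))
    (hpos : 0 < S.Hsec) (X Y : Finset (Fin 8))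
    (hYX : Y ∪ X = insert (elt2 Y) (insert (elt1 Y) X))
    (hA : ({elt1 X, mate x, elt1 Y} : Finset (Fin 8)) ⊆ insert (elt1 Y) (insert (mate x) X))
    (h1a : x ∉ insert (elt2 Y) (insert (elt1 Y) X))
    (h1b : mate x ∉ insert (elt2 Y) (insert (elt1 Y) X))
    (h1c : (insert (elt2 Y) (insert (elt1 Y) X)).card ≤ 4)
    (h1d : (insert (elt2 Y) (insert (elt1 Y) X)).card = 4 →
      VamosDep (insert (elt2 Y) (insert (elt1 Y) X)))
    (h3 : QualWitness x (insert (elt1 Y) (insert (mate x) X))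
      [insert (mate x) X, insert (elt1 Y) (insert (mate x) X)])
    (h2 : QualWitness x (insert (elt2 Y) (insert (elt1 Y) (insert (mate x) X)))
      [insert (mate x) X, insert (elt1 Y) (insert (mate x) X)])
    (h5a : x ∉ ({elt1 X, mate x, elt1 Y} : Finset (Fin 8)))
    (h5c : ({elt1 X, mate x, elt1 Y} : Finset (Fin 8)).card ≤ 3)
    (h5s : NoSpecialSubset (insert x ({elt1 X, mate x, elt1 Y} : Finset (Fin 8))))
    (h6 : QualWitness x (insert (elt2 Y) ({elt1 X, mate x, elt1 Y} : Finset (Fin 8)))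
      [insert (mate x) Y, insert (elt2 Y) ({elt1 X, mate x, elt1 Y} : Finset (Fin 8))]) :
    S.hcond Y X ≤ 1 + 3 * S.lam :=
  big_case S x hperf hpos X Y (elt1 Y) (elt2 Y) (mate x) (elt1 X) hYX hA
    (not_qualified_gen x _ h1a h1b h1c h1d)
    (qual_of_witness x _ _ h3)
    (qual_of_witness x _ _ h2)
    (not_qualified_nosuper x _ h5a h5c h5s)
    (qual_of_witness x _ _ h6)

end Vamos

/-- If `X`, `Y` are distinct Vamos pairs with `X ∪ Y` a circuit and the dealer a
member of neither `X` nor `Y`, then `h(Y|X) ≤ 1 + 3λ`. -/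
theorem hcond_le_one_add_three_lam (x : Fin 8)
    (S : Scheme (Fin 8)) (hperf : S.IsPerfect (VamosQualified x)) (hpos : 0 < S.Hsec)
    (X Y : Finset (Fin 8)) (hX : IsVamosPair X) (hY : IsVamosPair Y) (hne : X ≠ Y)
    (hcirc : VamosCircuit (X ∪ Y)) (hxX : x ∉ X) (hxY : x ∉ Y) :
    S.hcond Y X ≤ 1 + 3 * S.lam := by
  rcases hX with rfl | rfl | rfl | rfl <;> rcases hY with rfl | rfl | rfl | rfl <;>
    first
      | exact absurd rfl hne
      | exact absurd hcirc.1 (by decide)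
      | (fin_cases x <;>
          first
            | exact absurd (by decide) hxX
            | exact absurd (by decide) hxY
            | exact big_case' S _ hperf hpos _ _ (by decide) (by decide) (by decide)
                (by decide) (by decide) (by decide) (by decide) (by decide) (by decide)
                (by decide) (by decide) (by decide))
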